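/- Let p = 2, n a positive integer, and m = 2^n + 1. Then the quandle X = Z_2[t,t^{-1}]/(ξ_m(t)) (Alexander quandle with x*y = tx + (1-t)y) has non-trivial second quandle cohomology with coefficients in X: H^2_Q(X; X) ≠ 0. Specifically, the 2-cocycle f(x_1, x_2) = (x_1 - x_2)^{2^n} x_2 evaluates non-trivially on the 2-cycle arising from the coloring of the (2,m)-torus knot with top color vector (1,0), giving the value t^2 ξ_m'(t) ≠ 0 in X, so f is not a coboundary. -/

import Mathlib

open LaurentPolynomial Finset Polynomial

private lemma frob2 {R : Type*} [CommRing R] (h2 : (2:R) = 0) (k : ℕ) (a b : R) :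
    (a + b) ^ (2 ^ k) = a ^ (2 ^ k) + b ^ (2 ^ k) := by
  induction k with
  | zero => simp
  | succ k ih =>
    rw [pow_succ, pow_mul, pow_mul, pow_mul, ih]
    linear_combination (a ^ (2 ^ k) * b ^ (2 ^ k)) * h2

private lemma cocycle_id {R : Type*} [CommRing R] (h2 : (2:R) = 0) (q : ℕ)
    (hfr : ∀ a b : R, (a + b) ^ q = a ^ q + b ^ q) (hqe : Even q)
    (t : R) (ht : t ^ q * t = 1) (x y z : R) :
    (x - y) ^ q * y + (t * x + (1 - t) * y - z) ^ q * z
      = (x - z) ^ q * z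
        + ((t * x + (1 - t) * z) - (t * y + (1 - t) * z)) ^ q * (t * y + (1 - t) * z) := by
  have h1 : (t * x + (1 - t) * y - z) ^ q = t ^ q * (x - z) ^ q + (1 - t) ^ q * (y - z) ^ q := by
    rw [show t * x + (1 - t) * y - z = t * (x - z) + (1 - t) * (y - z) by ring, hfr,
      mul_pow, mul_pow]
  have h2' : ((t * x + (1 - t) * z) - (t * y + (1 - t) * z)) ^ q = t ^ q * (x - y) ^ q := by
    rw [show (t * x + (1 - t) * z) - (t * y + (1 - t) * z) = t * (x - y) by ring, mul_pow]
  have h3 : (1 - t) ^ q = 1 + t ^ q := by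
    rw [show (1 : R) - t = 1 + (-t) by ring, hfr, one_pow, hqe.neg_pow]
  have h4 : (y - z) ^ q = (x - y) ^ q + (x - z) ^ q := by
    rw [show y - z = (x - z) + (-(x - y)) by ring, hfr, hqe.neg_pow, add_comm]
  rw [h1, h2', h3, h4]
  linear_combination (-((x - y) ^ q) * y + (x - y) ^ q * z) * ht
    + ((x - y) ^ q * z + t ^ q * (x - z) ^ q * z) * h2

set_option maxHeartbeats 1600000 in
/-- for `m = 2ⁿ+1` and the Alexander quandle
`X = Z_2[t,t⁻¹]/(ξ_m(t))`, the map `f(x₁,x₂) = (x₁-x₂)^{2ⁿ} x₂` is a quandle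
2-cocycle which evaluates on the 2-cycle of the `(2,m)`-torus knot coloring
with top color vector `(1,0)` to `t²ξ_m'(t) ≠ 0`, and `f` is not a coboundary;
hence `H²_Q(X;X) ≠ 0`. -/
theorem stmt19 (n : ℕ) (hn : 0 < n) :
    let m := 2 ^ n + 1
    let ξpoly : Polynomial (ZMod 2) := ∑ i ∈ Finset.range m, X ^ i
    let Q := LaurentPolynomial (ZMod 2) ⧸ Ideal.span {ξpoly.toLaurent}
    let t : Q := Ideal.Quotient.mk (Ideal.span {ξpoly.toLaurent}) (T 1)
    let op : Q → Q → Q := fun x y => t * x + (1 - t) * y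
    let f : Q → Q → Q := fun x1 x2 => (x1 - x2) ^ (2 ^ n) * x2
    let ξ : ℕ → Q := fun k => ∑ i ∈ Finset.range k, t ^ i
    let ξ' : Q := Ideal.Quotient.mk (Ideal.span {ξpoly.toLaurent})
      ((Polynomial.derivative ξpoly).toLaurent)
    -- f is a quandle 2-cocycle:
    ((∀ x y z : Q, f x y + f (op x y) z = f x z + f (op x z) (op y z)) ∧
      (∀ x : Q, f x x = 0)) ∧
    -- its evaluation on the torus-knot 2-cycle is t²ξ_m'(t) ≠ 0:
    ((∑ k ∈ Finset.range m, f (t * ξ k) (t * ξ (k + 1))) = t ^ 2 * ξ' ∧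
      t ^ 2 * ξ' ≠ 0) ∧
    -- f is not a 2-coboundary, so H²_Q(X;X) ≠ 0:
    ¬ ∃ g : Q → Q, ∀ x y : Q, f x y = g x - g (op x y) := by
  intro m ξpoly Q t op f ξ ξ'
  set I : Ideal (LaurentPolynomial (ZMod 2)) := Ideal.span {ξpoly.toLaurent} with hI
  set ψ : Polynomial (ZMod 2) →+* Q :=
    (Ideal.Quotient.mk I).comp (Polynomial.toLaurent) with hψ
  have hψX : ψ X = t := by
    simp only [ψ, RingHom.comp_apply, Polynomial.toLaurent_X]
    rfl
  have hξ0 : ψ ξpoly = 0 := by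
    simp only [ψ, RingHom.comp_apply]
    exact Ideal.Quotient.eq_zero_iff_mem.mpr (Ideal.subset_span rfl)
  have hp2 : (2 : Polynomial (ZMod 2)) = 0 := by
    rw [← map_ofNat (C : ZMod 2 →+* Polynomial (ZMod 2)) 2, show (2:ZMod 2) = 0 by decide,
      map_zero]
  have h2Q : (2 : Q) = 0 := by rw [← map_ofNat ψ 2, hp2, map_zero]
  have hξψ : ψ ξpoly = ∑ i ∈ Finset.range m, t ^ i := by
    simp only [ξpoly, map_sum, map_pow, hψX]
  have hξt : (∑ i ∈ Finset.range m, t ^ i) = 0 := by rw [← hξψ, hξ0]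
  have htm : t ^ m = 1 := by
    have h := geom_sum_mul t m
    rw [hξt, zero_mul] at h
    linear_combination -h
  have ht1 : t ^ (2 ^ n) * t = 1 := by rw [← pow_succ]; exact htm
  have hqe : Even (2 ^ n) := (Nat.even_pow).mpr ⟨even_iff_two_dvd.mpr dvd_rfl, hn.ne'⟩
  -- the unit v with v * (t-1) = 1
  have heval : ξpoly.eval 1 = 1 := by
    simp only [ξpoly, eval_finset_sum, eval_pow, eval_X, one_pow, Finset.sum_const,
      Finset.card_range, nsmul_eq_mul, mul_one]
    show ((2 ^ n + 1 : ℕ) : ZMod 2) = 1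
    push_cast
    rw [show ((2 : ZMod 2)) = 0 by decide, zero_pow hn.ne', zero_add]
  obtain ⟨h, hh⟩ := Polynomial.X_sub_C_dvd_sub_C_eval (a := (1 : ZMod 2)) (p := ξpoly)
  have hvv := congrArg ψ hh
  rw [heval] at hvv
  simp only [map_sub, map_mul, map_one, hξ0, hψX] at hvv
  set v : Q := -(ψ h) with hvdef
  have hv : v * (t - 1) = 1 := by
    rw [hvdef]
    linear_combination hvv
  -- sum of powers of s = t^(2^n) vanishes
  have hsm : (t ^ (2 ^ n)) ^ m = 1 := by rw [pow_right_comm, htm, one_pow]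
  have hgs := geom_sum_mul (t ^ (2 ^ n)) m
  rw [hsm, sub_self] at hgs
  have h9 : (t ^ (2 ^ n) - 1) * (-(t * v)) = 1 := by
    linear_combination (-v) * ht1 + hv
  have hs0 : (∑ k ∈ Finset.range m, (t ^ (2 ^ n)) ^ k) = 0 := by
    have h10 : (∑ k ∈ Finset.range m, (t ^ (2 ^ n)) ^ k) * ((t ^ (2 ^ n) - 1) * (-(t * v)))
        = 0 := by rw [← mul_assoc, hgs, zero_mul]
    rwa [h9, mul_one] at h10
  have hm1 : ((m : ℕ) : Q) = 1 := by
    show ((2 ^ n + 1 : ℕ) : Q) = 1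
    push_cast
    rw [h2Q, zero_pow hn.ne', zero_add]
  -- derivative identity
  have hgm := congrArg derivative (geom_sum_mul (X : Polynomial (ZMod 2)) m)
  rw [derivative_mul, derivative_sub, derivative_X, derivative_one, derivative_sub,
    derivative_X_pow, derivative_one, sub_zero, sub_zero, mul_one,
    show ((m : ℕ) : ZMod 2) = 1 by
      show ((2 ^ n + 1 : ℕ) : ZMod 2) = 1
      push_cast
      rw [show ((2 : ZMod 2)) = 0 by decide, zero_pow hn.ne', zero_add],
    map_one, one_mul] at hgm
  -- hgm : derivative ξpoly * (X - 1) + ξpoly = X ^ (m - 1)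
  have hξ'ψ : ξ' = ψ (derivative ξpoly) := rfl
  have hd1 : ξ' * (t - 1) = t ^ (2 ^ n) := by
    have h11 := congrArg ψ hgm
    simp only [map_add, map_mul, map_sub, map_pow, map_one, hψX, hξ0, add_zero] at h11
    rw [hξ'ψ]
    change ψ (derivative ξpoly) * (t - 1) + ψ ξpoly = t ^ (m - 1) at h11
    rw [hξ0, add_zero] at h11
    rw [h11]
    norm_num [m]
  -- value of (t-1) * sum
  have hξsucc : ∀ j : ℕ, ξ (j + 1) = ξ j + t ^ j := fun j => Finset.sum_range_succ _ _
  have hkey : ∀ k : ℕ, (t - 1) * f (t * ξ k) (t * ξ (k + 1))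
      = t - t * (t ^ (2 ^ n)) ^ (k + 1) := by
    intro k
    show (t - 1) * ((t * ξ k - t * ξ (k + 1)) ^ (2 ^ n) * (t * ξ (k + 1)))
      = t - t * (t ^ (2 ^ n)) ^ (k + 1)
    have hA : t * ξ k - t * ξ (k + 1) = -(t ^ (k + 1)) := by
      rw [hξsucc k]; ring
    have hnp : (-(t ^ (k + 1))) ^ 2 ^ n = (t ^ (2 ^ n)) ^ (k + 1) := by
      rw [hqe.neg_pow (t ^ (k + 1)), ← pow_mul, Nat.mul_comm, pow_mul]
    rw [hA, hnp]
    have hgeo : ξ (k + 1) * (t - 1) = t ^ (k + 1) - 1 := geom_sum_mul t (k + 1)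
    have h6 : (t ^ (2 ^ n)) ^ (k + 1) * t ^ (k + 1) = 1 := by
      rw [← mul_pow, ht1, one_pow]
    linear_combination (t * (t ^ (2 ^ n)) ^ (k + 1)) * hgeo + t * h6
  have hsum1 : (t - 1) * (∑ k ∈ Finset.range m, f (t * ξ k) (t * ξ (k + 1))) = t := by
    rw [Finset.mul_sum]
    calc (∑ k ∈ Finset.range m, (t - 1) * f (t * ξ k) (t * ξ (k + 1)))
        = ∑ k ∈ Finset.range m, (t - t * (t ^ (2 ^ n)) ^ (k + 1)) := by
          exact Finset.sum_congr rfl fun k _ => hkey k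
      _ = t := by
          have hs2 : (∑ k ∈ Finset.range m, t * (t ^ (2 ^ n)) ^ (k + 1))
              = t * t ^ (2 ^ n) * (∑ k ∈ Finset.range m, (t ^ (2 ^ n)) ^ k) := by
            rw [Finset.mul_sum]
            exact Finset.sum_congr rfl fun k _ => by rw [pow_succ]; ring
          rw [Finset.sum_sub_distrib, hs2, hs0, mul_zero, sub_zero, Finset.sum_const,
            Finset.card_range, nsmul_eq_mul, hm1, one_mul]
  have hsum2 : (t - 1) * (t ^ 2 * ξ') = t := by
    rw [show (t - 1) * (t ^ 2 * ξ') = t ^ 2 * (ξ' * (t - 1)) by ring, hd1, ← pow_add]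
    rw [show 2 + 2 ^ n = m + 1 by show 2 + 2 ^ n = 2 ^ n + 1 + 1; ring, pow_succ, htm, one_mul]
  have hmain : (∑ k ∈ Finset.range m, f (t * ξ k) (t * ξ (k + 1))) = t ^ 2 * ξ' := by
    have h12 : (t - 1) * (∑ k ∈ Finset.range m, f (t * ξ k) (t * ξ (k + 1)))
        = (t - 1) * (t ^ 2 * ξ') := by rw [hsum1, hsum2]
    calc (∑ k ∈ Finset.range m, f (t * ξ k) (t * ξ (k + 1)))
        = (v * (t - 1)) * (∑ k ∈ Finset.range m, f (t * ξ k) (t * ξ (k + 1))) := by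
          rw [hv, one_mul]
      _ = v * ((t - 1) * (t ^ 2 * ξ')) := by rw [mul_assoc, h12]
      _ = (v * (t - 1)) * (t ^ 2 * ξ') := by ring
      _ = t ^ 2 * ξ' := by rw [hv, one_mul]
  -- nontriviality
  have hInetop : I ≠ ⊤ := by
    intro htop
    have h1mem : (1 : LaurentPolynomial (ZMod 2)) ∈ I := htop ▸ Submodule.mem_top
    rw [hI, Ideal.mem_span_singleton'] at h1mem
    obtain ⟨a, ha⟩ := h1mem
    obtain ⟨N, p, hp⟩ := a.exists_T_pow
    have h13 : Polynomial.toLaurent (p * ξpoly) = Polynomial.toLaurent ((X : Polynomial (ZMod 2)) ^ N) := by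
      rw [map_mul, hp, map_pow, Polynomial.toLaurent_X, T_pow, mul_one]
      rw [mul_comm a (T N), mul_assoc, ha, mul_one]
    have hpe : p * ξpoly = X ^ N := Polynomial.toLaurent_injective h13
    have hdvd : ξpoly ∣ (X : Polynomial (ZMod 2)) ^ N := ⟨p, by rw [← hpe, mul_comm]⟩
    obtain ⟨i, _, hassoc⟩ := (dvd_prime_pow Polynomial.prime_X N).mp hdvd
    obtain ⟨u, hu⟩ := hassoc
    obtain ⟨r, hr, hCr⟩ := Polynomial.isUnit_iff.mp u.isUnit
    rw [← hCr] at hu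
    have hc0 : ξpoly.coeff 0 = 1 := by
      simp only [ξpoly, finset_sum_coeff, coeff_X_pow, Finset.sum_ite_eq, Finset.mem_range]
      simp [m]
    have hc1 : ξpoly.coeff 1 = 1 := by
      simp only [ξpoly, finset_sum_coeff, coeff_X_pow, Finset.sum_ite_eq, Finset.mem_range]
      have : 1 < m := by have := Nat.one_le_two_pow (n := n); omega
      simp [this]
    rcases i with _ | i
    · have := congrArg (fun p => Polynomial.coeff p 1) hu
      simp only [pow_zero, coeff_mul_C, hc1, one_mul, Polynomial.coeff_one] at this
      norm_num at this
      exact hr.ne_zero this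
    · have := congrArg (fun p => Polynomial.coeff p 0) hu
      simp only [coeff_mul_C, hc0, one_mul, coeff_X_pow] at this
      norm_num at this
      exact hr.ne_zero this
  have hnt : Nontrivial Q := Ideal.Quotient.nontrivial_iff.mpr hInetop
  have hne : t ^ 2 * ξ' ≠ 0 := by
    intro h0
    rw [h0, mul_zero] at hsum2
    rw [← hsum2] at htm
    simp only [zero_pow (by positivity : m ≠ 0)] at htm
    exact zero_ne_one htm
  refine ⟨⟨?_, ?_⟩, ⟨hmain, hne⟩, ?_⟩
  · intro x y z
    exact cocycle_id h2Q (2 ^ n) (frob2 h2Q n) hqe t ht1 x y z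
  · intro x
    show (x - x) ^ (2 ^ n) * x = 0
    rw [sub_self, zero_pow (by positivity), zero_mul]
  · rintro ⟨g, hg⟩
    have hper : ∀ k : ℕ, ξ (k + m) = ξ k := by
      intro k
      show (∑ i ∈ Finset.range (k + m), t ^ i) = ∑ i ∈ Finset.range k, t ^ i
      rw [Nat.add_comm k m, Finset.sum_range_add]
      rw [hξt, zero_add]
      exact Finset.sum_congr rfl fun i _ => by rw [pow_add, htm, one_mul]
    have hop : ∀ k : ℕ, op (t * ξ k) (t * ξ (k + 1)) = t * ξ (k + 2) := by
      intro k
      show t * (t * ξ k) + (1 - t) * (t * ξ (k + 1)) = t * ξ (k + 2)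
      rw [show k + 2 = (k + 1) + 1 from rfl, hξsucc (k+1), hξsucc k]
      linear_combination (-(t ^ (k + 2))) * h2Q
    have htel : (∑ k ∈ Finset.range m, f (t * ξ k) (t * ξ (k + 1)))
        = (∑ k ∈ Finset.range m, g (t * ξ k)) - ∑ k ∈ Finset.range m, g (t * ξ (k + 2)) := by
      rw [← Finset.sum_sub_distrib]
      exact Finset.sum_congr rfl fun k _ => by rw [hg, hop]
    have hshift : (∑ k ∈ Finset.range m, g (t * ξ (k + 2)))
        = ∑ k ∈ Finset.range m, g (t * ξ k) := by
      have e1 : (∑ k ∈ Finset.range (2 + m), g (t * ξ k))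
          = (∑ k ∈ Finset.range 2, g (t * ξ k)) + ∑ k ∈ Finset.range m, g (t * ξ (2 + k)) :=
        Finset.sum_range_add _ 2 m
      have e2 : (∑ k ∈ Finset.range (m + 2), g (t * ξ k))
          = (∑ k ∈ Finset.range m, g (t * ξ k)) + ∑ k ∈ Finset.range 2, g (t * ξ (m + k)) :=
        Finset.sum_range_add _ m 2
      have e3 : (∑ k ∈ Finset.range 2, g (t * ξ (m + k)))
          = ∑ k ∈ Finset.range 2, g (t * ξ k) := by
        refine Finset.sum_congr rfl fun k _ => ?_
        rw [Nat.add_comm m k, hper k]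
      have e4 : (∑ k ∈ Finset.range m, g (t * ξ (2 + k)))
          = ∑ k ∈ Finset.range m, g (t * ξ (k + 2)) := by
        exact Finset.sum_congr rfl fun k _ => by rw [Nat.add_comm 2 k]
      rw [Nat.add_comm 2 m] at e1
      rw [e2, e3] at e1
      rw [e4] at e1
      linear_combination -e1
    rw [htel, hshift, sub_self] at hmain
    exact hne hmain.symm
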